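/- If the solution set of the bidual SDP (8) is nonempty and rank(A) = m < n, then it is not a singleton: for any optimal X* and any nonzero w ∈ W₀, the matrix X* + wwᵀ is a distinct optimal solution. -/

import Mathlib

/-- Index type for ℝ^{2n+1}, split into blocks (z₀, z, x). -/
abbrev Idx (n : ℕ) := Fin 1 ⊕ (Fin n ⊕ Fin n)

/-- The objective matrix Q: (z₀,z)-block ½eᵀ, symmetric, zeros elsewhere. -/
noncomputable def Qmat (n : ℕ) : Matrix (Idx n) (Idx n) ℝ := fun p q =>
  match p, q with
  | Sum.inl _, Sum.inr (Sum.inl _) => 1 / 2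
  | Sum.inr (Sum.inl _), Sum.inl _ => 1 / 2
  | _, _ => 0

/-- The constraint matrix A_j: (z₀,x)-block ½a_jᵀ, symmetric. -/
noncomputable def Amat {m n : ℕ} (A : Matrix (Fin m) (Fin n) ℝ) (j : Fin m) :
    Matrix (Idx n) (Idx n) ℝ := fun p q =>
  match p, q with
  | Sum.inl _, Sum.inr (Sum.inr i) => A j i / 2
  | Sum.inr (Sum.inr i), Sum.inl _ => A j i / 2
  | _, _ => 0

/-- E₀ = diag(1,0,…,0). -/
noncomputable def E0mat (n : ℕ) : Matrix (Idx n) (Idx n) ℝ := fun p q =>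
  match p, q with
  | Sum.inl _, Sum.inl _ => 1
  | _, _ => 0

/-- E_i: (z₀,z)-entries −e_i (symmetric) and z-block 2·diag(e_i). -/
noncomputable def Emat (n : ℕ) (i : Fin n) : Matrix (Idx n) (Idx n) ℝ := fun p q =>
  match p, q with
  | Sum.inl _, Sum.inr (Sum.inl j) => if j = i then -1 else 0
  | Sum.inr (Sum.inl j), Sum.inl _ => if j = i then -1 else 0
  | Sum.inr (Sum.inl j), Sum.inr (Sum.inl j') => if j = i ∧ j' = i then 2 else 0
  | _, _ => 0

/-- C_i: (z,x)-block diag(e_i), symmetric. -/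
noncomputable def Cmat (n : ℕ) (i : Fin n) : Matrix (Idx n) (Idx n) ℝ := fun p q =>
  match p, q with
  | Sum.inr (Sum.inl j), Sum.inr (Sum.inr j') => if j = i ∧ j' = i then 1 else 0
  | Sum.inr (Sum.inr j), Sum.inr (Sum.inl j') => if j = i ∧ j' = i then 1 else 0
  | _, _ => 0

/-- Feasibility for the bidual SDP (8). -/
def BidualFeasible {m n : ℕ} (A : Matrix (Fin m) (Fin n) ℝ) (y : Fin m → ℝ)
    (X : Matrix (Idx n) (Idx n) ℝ) : Prop :=
  X.PosSemidef ∧ (∀ j, (Amat A j * X).trace = y j) ∧ (E0mat n * X).trace = 1 ∧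
    ∀ i, (Emat n i * X).trace = 0 ∧ (Cmat n i * X).trace = 0

/-- Optimality for the bidual SDP (8). -/
def BidualOptimal {m n : ℕ} (A : Matrix (Fin m) (Fin n) ℝ) (y : Fin m → ℝ)
    (X : Matrix (Idx n) (Idx n) ℝ) : Prop :=
  BidualFeasible A y X ∧
    ∀ Y, BidualFeasible A y Y → (Qmat n * Y).trace ≤ (Qmat n * X).trace

/-- Membership in W₀: the z₀ and z coordinates vanish and the x coordinates
lie in ker A. -/
def memW0 {m n : ℕ} (A : Matrix (Fin m) (Fin n) ℝ) (w : Idx n → ℝ) : Prop :=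
  w (Sum.inl 0) = 0 ∧ (∀ i : Fin n, w (Sum.inr (Sum.inl i)) = 0) ∧
    A.mulVec (fun j => w (Sum.inr (Sum.inr j))) = 0


section Aux

open Matrix

lemma trace_mul_vv {k : Type*} [Fintype k] [DecidableEq k]
    (M : Matrix k k ℝ) (w : k → ℝ) :
    (M * Matrix.vecMulVec w w).trace = ∑ p, ∑ q, M p q * w q * w p := by
  simp [Matrix.trace, Matrix.diag, Matrix.mul_apply, Matrix.vecMulVec_apply,
    Finset.mul_sum, mul_comm, mul_assoc, mul_left_comm]

lemma vv_psd {k : Type*} [Fintype k] (w : k → ℝ) :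
    (Matrix.vecMulVec w w).PosSemidef := by
  constructor
  · ext p q
    simp [Matrix.vecMulVec_apply, Matrix.conjTranspose_apply, mul_comm]
  · have h := Matrix.posSemidef_vecMulVec_self_star w
    simp only [star_trivial] at h
    exact h.2

end Aux

theorem stmt_17 (m n : ℕ) (A : Matrix (Fin m) (Fin n) ℝ) (y : Fin m → ℝ)
    (hrank : A.rank = m) (hmn : m < n)
    (X : Matrix (Idx n) (Idx n) ℝ) (hX : BidualOptimal A y X)
    (w : Idx n → ℝ) (hw : memW0 A w) (hw0 : w ≠ 0) :
    BidualOptimal A y (X + Matrix.vecMulVec w w) ∧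
      X + Matrix.vecMulVec w w ≠ X := by
  obtain ⟨h1, h2, h3⟩ := hw
  obtain ⟨⟨hpsd, hA, hE0, hEC⟩, hopt⟩ := hX
  have hz : ∀ x : Fin 1, w (Sum.inl x) = 0 := fun x => by
    have : x = 0 := Subsingleton.elim _ _
    rw [this]; exact h1
  have hQ : (Qmat n * Matrix.vecMulVec w w).trace = 0 := by
    rw [trace_mul_vv]
    simp [Fintype.sum_sum_type, Qmat, hz, h2]
  have hAj : ∀ j, (Amat A j * Matrix.vecMulVec w w).trace = 0 := by
    intro j
    rw [trace_mul_vv]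
    simp [Fintype.sum_sum_type, Amat, hz, h2]
  have hE0' : (E0mat n * Matrix.vecMulVec w w).trace = 0 := by
    rw [trace_mul_vv]
    simp [Fintype.sum_sum_type, E0mat, hz, h2]
  have hEi : ∀ i, (Emat n i * Matrix.vecMulVec w w).trace = 0 := by
    intro i
    rw [trace_mul_vv]
    simp [Fintype.sum_sum_type, Emat, hz, h2]
  have hCi : ∀ i, (Cmat n i * Matrix.vecMulVec w w).trace = 0 := by
    intro i
    rw [trace_mul_vv]
    simp [Fintype.sum_sum_type, Cmat, hz, h2]
  have hfeas : BidualFeasible A y (X + Matrix.vecMulVec w w) := by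
    refine ⟨hpsd.add (vv_psd w), fun j => ?_, ?_, fun i => ⟨?_, ?_⟩⟩
    · rw [mul_add, Matrix.trace_add, hAj, add_zero]; exact hA j
    · rw [mul_add, Matrix.trace_add, hE0', add_zero]; exact hE0
    · rw [mul_add, Matrix.trace_add, hEi, add_zero]; exact (hEC i).1
    · rw [mul_add, Matrix.trace_add, hCi, add_zero]; exact (hEC i).2
  have hobj : (Qmat n * (X + Matrix.vecMulVec w w)).trace = (Qmat n * X).trace := by
    rw [mul_add, Matrix.trace_add, hQ, add_zero]
  refine ⟨⟨hfeas, fun Y hY => ?_⟩, ?_⟩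
  · rw [hobj]; exact hopt Y hY
  · intro hcontra
    have hvv : Matrix.vecMulVec w w = 0 := by
      have := hcontra
      rwa [add_eq_left] at this
    apply hw0
    funext p
    have := congrFun (congrFun hvv p) p
    simpa [Matrix.vecMulVec_apply, mul_self_eq_zero] using this
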